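/- arXiv:1004.1082 — 6 statements merged into one kernel-verified Lean document; each statement's English description precedes it below -/
import Mathlib

section
/- Let V be a finite-dimensional real inner product space and L : V → V a linear operator, with adjoint Lᵗ. Then the following three conditions are equivalent: (i) there exists λ ∈ ℝ such that L + Lᵗ = 2λ·id (equivalently L = λ·id + (L − Lᵗ)/2); (ii) for all Z, W ∈ V with ‖Z‖ = ‖W‖ one has ⟨LZ, Z⟩ = ⟨LW, W⟩; (iii) for all Z, W ∈ V with ‖Z‖ = ‖W‖ = 1 and ⟨Z, W⟩ = 0 one has ⟨LZ, Z⟩ − ⟨LW, W⟩ = 0 and ⟨LZ, W⟩ + ⟨LW, Z⟩ = 0. (This is Lemma 3.3 of the paper, with the sign in the second equation of (iii) corrected so that it expresses the vanishing of the off-diagonal entries of the symmetric part of L.) -/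
open scoped RealInnerProductSpace

/-- Lemma 3.3: for a linear operator `L` on a finite-dimensional real inner product
space, the following are equivalent: (i) `L + Lᵗ = 2λ·id` for some real `λ`;
(ii) `⟪LZ, Z⟫ = ⟪LW, W⟫` whenever `‖Z‖ = ‖W‖`; (iii) for orthonormal pairs `Z, W`,
`⟪LZ, Z⟫ - ⟪LW, W⟫ = 0` and `⟪LZ, W⟫ + ⟪LW, Z⟫ = 0`. -/
theorem lemma_trivial_tfae {V : Type*} [NormedAddCommGroup V] [InnerProductSpace ℝ V]
    [FiniteDimensional ℝ V] (L : V →ₗ[ℝ] V) :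
    List.TFAE
      [ (∃ l : ℝ, L + LinearMap.adjoint L = (2 * l) • (LinearMap.id : V →ₗ[ℝ] V)),
        (∀ Z W : V, ‖Z‖ = ‖W‖ → ⟪L Z, Z⟫ = ⟪L W, W⟫),
        (∀ Z W : V, ‖Z‖ = 1 → ‖W‖ = 1 → ⟪Z, W⟫ = 0 →
          ⟪L Z, Z⟫ - ⟪L W, W⟫ = 0 ∧ ⟪L Z, W⟫ + ⟪L W, Z⟫ = 0) ] := by
  set S := L + LinearMap.adjoint L with hS
  have hSapp : ∀ v, S v = L v + LinearMap.adjoint L v := fun v => rfl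
  -- key: ⟪S z, w⟫ = ⟪L z, w⟫ + ⟪L w, z⟫
  have hSin : ∀ z w : V, ⟪S z, w⟫ = ⟪L z, w⟫ + ⟪L w, z⟫ := by
    intro z w
    rw [hSapp, inner_add_left, LinearMap.adjoint_inner_left, real_inner_comm z (L w)]
  tfae_have 1 → 2 := by
    rintro ⟨l, hl⟩ Z W hZW
    have hq : ∀ v : V, 2 * ⟪L v, v⟫ = 2 * l * ‖v‖ ^ 2 := by
      intro v
      have h0 : ⟪S v, v⟫ = 2 * l * ‖v‖ ^ 2 := by
        rw [hl]
        simp only [LinearMap.smul_apply, LinearMap.id_apply, real_inner_smul_left,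
          real_inner_self_eq_norm_sq]
      have h1 := hSin v v
      have h2 : ⟪L v, v⟫ + ⟪L v, v⟫ = 2 * l * ‖v‖ ^ 2 := by rw [← h1]; exact h0
      linarith
    have h1 := hq Z
    have h2 := hq W
    rw [hZW] at h1
    linarith
  tfae_have 2 → 3 := by
    intro h2 Z W hZ hW ho
    constructor
    · have := h2 Z W (by rw [hZ, hW])
      linarith
    · have hn : ‖Z + W‖ = ‖Z - W‖ := by
        have h1 : ‖Z + W‖ ^ 2 = ‖Z - W‖ ^ 2 := by
          rw [norm_add_sq_real, norm_sub_sq_real, ho]; ring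
        rw [← Real.sqrt_sq (norm_nonneg (Z + W)), ← Real.sqrt_sq (norm_nonneg (Z - W)), h1]
      have := h2 (Z + W) (Z - W) hn
      simp only [map_add, map_sub, inner_add_left, inner_add_right, inner_sub_left,
        inner_sub_right] at this
      have hc : ⟪L Z, W⟫ + ⟪L W, Z⟫ = 0 := by linarith
      exact hc
  tfae_have 3 → 1 := by
    intro h3
    -- every nonzero vector is an eigenvector of S
    have key : ∀ v : V, v ≠ 0 → ∃ c : ℝ, S v = c • v := by
      intro v hv
      set z : V := ‖v‖⁻¹ • v with hz
      have hvn : ‖v‖ ≠ 0 := norm_ne_zero_iff.mpr hv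
      have hzu : ‖z‖ = 1 := by
        rw [hz, norm_smul, norm_inv, norm_norm, inv_mul_cancel₀ hvn]
      set c : ℝ := ⟪S z, z⟫ with hc
      set r : V := S z - c • z with hr
      have hrz : ⟪z, r⟫ = 0 := by
        rw [hr, inner_sub_right, real_inner_smul_right, real_inner_comm (S z) z,
          real_inner_self_eq_norm_sq, hzu, hc]
        norm_num
      have hr0 : r = 0 := by
        by_contra hrne
        have hrn : ‖r‖ ≠ 0 := norm_ne_zero_iff.mpr hrne
        set w : V := ‖r‖⁻¹ • r with hw
        have hwu : ‖w‖ = 1 := by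
          rw [hw, norm_smul, norm_inv, norm_norm, inv_mul_cancel₀ hrn]
        have hzw : ⟪z, w⟫ = 0 := by
          rw [hw, real_inner_smul_right, hrz, mul_zero]
        have h := (h3 z w hzu hwu hzw).2
        have hSzw : ⟪S z, w⟫ = 0 := by rw [hSin]; exact h
        have : ⟪S z, w⟫ = ‖r‖ := by
          rw [hw, real_inner_smul_right]
          have : ⟪S z, r⟫ = ‖r‖ ^ 2 := by
            rw [hr]
            have : ⟪S z, S z - c • z⟫ = ⟪S z - c • z, S z - c • z⟫ := by
              rw [inner_sub_left, inner_sub_right, inner_sub_right]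
              have hz1 : ⟪c • z, S z - c • z⟫ = 0 := by
                rw [real_inner_smul_left, real_inner_comm, ← hr, real_inner_comm,
                  hrz]
                ring
              rw [inner_sub_right] at hz1
              linarith
            rw [this, ← hr, real_inner_self_eq_norm_sq]
          rw [this]
          field_simp
        rw [hSzw] at this
        exact hrn this.symm
      have hSz : S z = c • z := by
        have := hr0
        rw [hr, sub_eq_zero] at this
        exact this
      refine ⟨c, ?_⟩
      have hvz : v = ‖v‖ • z := by rw [hz, smul_smul, mul_inv_cancel₀ hvn, one_smul]
      rw [show S v = S (‖v‖ • z) by rw [← hvz], map_smul, hSz, hz]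
      match_scalars
      field_simp
    -- conclude S is a scalar multiple of the identity
    by_cases hV : ∃ u : V, u ≠ 0
    · obtain ⟨u, hu⟩ := hV
      obtain ⟨c, hcu⟩ := key u hu
      have hall : ∀ v : V, S v = c • v := by
        intro v
        by_cases hsp : v ∈ Submodule.span ℝ ({u} : Set V)
        · obtain ⟨a, ha⟩ := Submodule.mem_span_singleton.mp hsp
          rw [← ha, map_smul, hcu, smul_smul, smul_smul, mul_comm]
        · have hv : v ≠ 0 := by
            rintro rfl; exact hsp (Submodule.zero_mem _)
          have huv : u + v ≠ 0 := by
            intro h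
            apply hsp
            have : v = (-1 : ℝ) • u := by
              rw [neg_one_smul]
              exact (neg_eq_of_add_eq_zero_right h).symm
            rw [this]
            exact Submodule.smul_mem _ _ (Submodule.mem_span_singleton_self u)
          obtain ⟨c₁, hc₁⟩ := key v hv
          obtain ⟨c₂, hc₂⟩ := key (u + v) huv
          have hexp : (c - c₂) • u = (c₂ - c₁) • v := by
            have : S (u + v) = S u + S v := map_add _ _ _
            rw [hc₂, hcu, hc₁, smul_add] at this
            rw [sub_smul, sub_smul]
            have := this.symm
            abel_nf
            abel_nf at this
            linear_combination (norm := module) this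
          have hcc : c₂ = c₁ := by
            by_contra hne
            apply hsp
            have h2 : v = (c₂ - c₁)⁻¹ • ((c - c₂) • u) := by
              rw [hexp, smul_smul, inv_mul_cancel₀ (sub_ne_zero.mpr hne), one_smul]
            rw [h2, smul_smul]
            exact Submodule.smul_mem _ _ (Submodule.mem_span_singleton_self u)
          have hcc2 : c = c₂ := by
            rw [hcc] at hexp
            simp only [sub_self, zero_smul] at hexp
            rcases smul_eq_zero.mp hexp with h | h
            · linarith
            · exact absurd h hu
          rw [hc₁, ← hcc, ← hcc2]
      refine ⟨c / 2, ?_⟩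
      ext v
      simp only [LinearMap.add_apply, LinearMap.smul_apply, LinearMap.id_apply, ← hSapp, hall]
      module
    · push_neg at hV
      refine ⟨0, ?_⟩
      ext v
      simp [hV v, hV (L v + LinearMap.adjoint L v)]
  tfae_finish
end

section
/- Let V be a nonzero finite-dimensional complex inner product space, L : V → V a normal linear operator, and λ ∈ ℂ such that every eigenvalue of L is equal to λ or to the complex conjugate of λ (i.e. the spectrum of L is contained in {λ, conj λ}). Then L + L* = 2·Re(λ)·id; equivalently, L = Re(λ)·id + (L − L*)/2, so the self-adjoint part of L is the scalar Re(λ). (Abstract form of Lemma 10.3: a normal operator ad_H on the generalized root space n_{α,β}, whose complexification has only the roots λ = α + iβ and its conjugate, satisfies ad_H = α(H)·I + (ad_H − ad_H*)/2.) -/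
open LinearMap Module.End

/-- Eigenvector of a normal operator is an eigenvector of the adjoint with conjugate
eigenvalue. -/
lemma adjoint_apply_eq_of_normal {V : Type*} [NormedAddCommGroup V]
    [InnerProductSpace ℂ V] [FiniteDimensional ℂ V]
    (L : V →ₗ[ℂ] V)
    (hnormal : L ∘ₗ LinearMap.adjoint L = LinearMap.adjoint L ∘ₗ L)
    (ν : ℂ) (v : V) (hv : L v = ν • v) :
    LinearMap.adjoint L v = (starRingEnd ℂ) ν • v := by
  have hn' : ∀ w, L (LinearMap.adjoint L w) = LinearMap.adjoint L (L w) :=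
    fun w => LinearMap.congr_fun hnormal w
  set M : V →ₗ[ℂ] V := L - ν • LinearMap.id with hMdef
  have hadjM : LinearMap.adjoint M
      = LinearMap.adjoint L - (starRingEnd ℂ) ν • LinearMap.id := by
    have hid : LinearMap.adjoint (LinearMap.id : V →ₗ[ℂ] V) = LinearMap.id := by
      apply LinearMap.ext; intro x
      apply ext_inner_right ℂ; intro y
      rw [LinearMap.adjoint_inner_left]; simp
    rw [hMdef, map_sub, map_smulₛₗ, hid]
  have hMv : M v = 0 := by simp [hMdef, hv]
  have hcomm : ∀ w, M (LinearMap.adjoint M w) = LinearMap.adjoint M (M w) := by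
    intro w
    rw [hadjM]
    simp only [hMdef, hadjM, LinearMap.sub_apply, LinearMap.smul_apply, LinearMap.id_apply,
      map_sub, map_smul, hn' w]
    module
  have hinner : (inner ℂ (LinearMap.adjoint M v) (LinearMap.adjoint M v) : ℂ) = 0 := by
    rw [LinearMap.adjoint_inner_left, hcomm, hMv, map_zero, inner_zero_right]
  have hz : LinearMap.adjoint M v = 0 := by rwa [inner_self_eq_zero] at hinner
  rw [hadjM] at hz
  simpa [sub_eq_zero] using hz

/-- Abstract form of Lemma 10.3: a normal operator `L` on a nonzero finite-dimensional
complex inner product space whose eigenvalues are all equal to `λ` or `conj λ`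
satisfies `L + L* = 2 Re(λ) · id`. -/
theorem normal_operator_selfadjoint_part_scalar {V : Type*} [NormedAddCommGroup V]
    [InnerProductSpace ℂ V] [FiniteDimensional ℂ V] [Nontrivial V]
    (L : V →ₗ[ℂ] V) (l : ℂ)
    (hnormal : L ∘ₗ LinearMap.adjoint L = LinearMap.adjoint L ∘ₗ L)
    (heig : ∀ μ : ℂ, Module.End.HasEigenvalue (L : Module.End ℂ V) μ →
      μ = l ∨ μ = (starRingEnd ℂ) l) :
    L + LinearMap.adjoint L = (2 * (l.re : ℂ)) • (LinearMap.id : V →ₗ[ℂ] V) := by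
  set c : ℂ := 2 * (l.re : ℂ) with hc
  set S : V →ₗ[ℂ] V := L + LinearMap.adjoint L - c • LinearMap.id with hSdef
  -- S is symmetric
  have hS : S.IsSymmetric := by
    intro x y
    simp only [hSdef, LinearMap.sub_apply, LinearMap.add_apply, LinearMap.smul_apply,
      LinearMap.id_apply, inner_sub_left, inner_sub_right, inner_add_left, inner_add_right,
      inner_smul_left, inner_smul_right, LinearMap.adjoint_inner_left,
      LinearMap.adjoint_inner_right]
    have : (starRingEnd ℂ) c = c := by
      rw [hc, map_mul, Complex.conj_ofReal, map_ofNat]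
    rw [this]
    ring
  -- L commutes with S
  have hLS : ∀ w, S (L w) = L (S w) := by
    intro w
    have hn' : L (LinearMap.adjoint L w) = LinearMap.adjoint L (L w) :=
      LinearMap.congr_fun hnormal w
    simp [hSdef, hn']
  -- every eigenvalue of S is zero
  have hzero : ∀ μ : ℂ, Module.End.HasEigenvalue (S : Module.End ℂ V) μ → μ = 0 := by
    intro μ hμ
    set E := Module.End.eigenspace (S : Module.End ℂ V) μ with hE
    have hEne : Nontrivial E := Submodule.nontrivial_iff_ne_bot.mpr hμ
    have hLE : ∀ v ∈ E, L v ∈ E := by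
      intro v hv
      have hv' : S v = μ • v := Module.End.mem_eigenspace_iff.mp hv
      have : S (L v) = μ • L v := by rw [hLS, hv', map_smul]
      exact Module.End.mem_eigenspace_iff.mpr this
    -- restrict L to E and find an eigenvalue
    set Lr : E →ₗ[ℂ] E := L.restrict hLE with hLr
    obtain ⟨ν, hν⟩ := Module.End.exists_eigenvalue (Lr : Module.End ℂ E)
    obtain ⟨w, hw⟩ := hν.exists_hasEigenvector
    have hw0 : (w : V) ≠ 0 := fun h => hw.2 (Subtype.ext h)
    have hLw : L (w : V) = ν • (w : V) := by
      have := congrArg (Subtype.val) hw.apply_eq_smul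
      simpa [hLr] using this
    -- ν is an eigenvalue of L, so Re ν = Re l
    have hνeig : Module.End.HasEigenvalue (L : Module.End ℂ V) ν :=
      Module.End.hasEigenvalue_of_hasEigenvector
        ⟨Module.End.mem_eigenspace_iff.mpr hLw, hw0⟩
    have hre : ν + (starRingEnd ℂ) ν = c := by
      rcases heig ν hνeig with h | h
      · rw [h, Complex.add_conj, hc]; push_cast; ring
      · rw [h]
        simp only [Complex.conj_conj]
        rw [add_comm, Complex.add_conj, hc]; push_cast; ring
    -- compute S w
    have hadjw : LinearMap.adjoint L (w : V) = (starRingEnd ℂ) ν • (w : V) :=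
      adjoint_apply_eq_of_normal L hnormal ν _ hLw
    have hSw : S (w : V) = μ • (w : V) :=
      Module.End.mem_eigenspace_iff.mp w.2
    have hSw' : S (w : V) = (ν + (starRingEnd ℂ) ν - c) • (w : V) := by
      simp [hSdef, hLw, hadjw, sub_smul, add_smul]
    rw [hSw'] at hSw
    have : (ν + (starRingEnd ℂ) ν - c - μ) • (w : V) = 0 := by
      rw [sub_smul, hSw]; simp
    have h0 : ν + (starRingEnd ℂ) ν - c - μ = 0 := by
      by_contra h
      exact hw0 (by simpa [h] using smul_eq_zero.mp this)
    rw [hre] at h0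
    linear_combination -h0
  -- S symmetric with all eigenvalues zero implies S = 0
  have hsup : (⨆ μ : ℂ, Module.End.eigenspace (S : Module.End ℂ V) μ) = ⊤ := by
    have := hS.orthogonalComplement_iSup_eigenspaces_eq_bot
    rwa [Submodule.orthogonal_eq_bot_iff] at this
  have hker : ∀ μ : ℂ, Module.End.eigenspace (S : Module.End ℂ V) μ ≤ LinearMap.ker S := by
    intro μ v hv
    rcases eq_or_ne v 0 with rfl | hv0
    · exact (LinearMap.ker S).zero_mem
    · have hμ0 : μ = 0 :=
        hzero μ (Module.End.hasEigenvalue_of_hasEigenvector ⟨hv, hv0⟩)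
      have := Module.End.mem_eigenspace_iff.mp hv
      rw [hμ0, zero_smul] at this
      simpa [LinearMap.mem_ker] using this
  have hkertop : LinearMap.ker S = ⊤ := by
    rw [eq_top_iff, ← hsup]
    exact iSup_le hker
  have hS0 : S = 0 := LinearMap.ker_eq_top.mp hkertop
  have := sub_eq_zero.mp (hSdef ▸ hS0)
  rw [this, hc]
end

section
/- Let a, b, α, β, x, y be real numbers. On the 4-dimensional real vector space with basis {A, B, Z, W}, let ⁅·,·⁆ be the unique antisymmetric bilinear bracket determined on basis pairs by ⁅A,B⁆ = aA + bB, ⁅A,Z⁆ = αZ + βW, ⁅A,W⁆ = −βZ + αW, ⁅B,Z⁆ = xZ + yW, ⁅B,W⁆ = −yZ + xW, and ⁅Z,W⁆ = 0. Then this bracket satisfies the Jacobi identity (and hence defines a Lie algebra structure) if and only if aα + bx = 0 and aβ + by = 0. -/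
set_option maxHeartbeats 1000000 in
/-- The case `dim(𝔞,𝔨,𝔪) = (2,0,2)`: the antisymmetric bilinear bracket on the
4-dimensional real vector space with basis `{A, B, Z, W}` (here `e 0 = A`, `e 1 = B`,
`e 2 = Z`, `e 3 = W`) determined by `⁅A,B⁆ = aA + bB`, `⁅A,Z⁆ = αZ + βW`,
`⁅A,W⁆ = −βZ + αW`, `⁅B,Z⁆ = xZ + yW`, `⁅B,W⁆ = −yZ + xW`, `⁅Z,W⁆ = 0` satisfies
the Jacobi identity iff `aα + bx = 0` and `aβ + by = 0`. -/
theorem jacobi_iff_dim_2_0_2 {V : Type*} [AddCommGroup V] [Module ℝ V]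
    (e : Module.Basis (Fin 4) ℝ V) (a b α β x y : ℝ)
    (B : V →ₗ[ℝ] V →ₗ[ℝ] V)
    (hanti : ∀ u v : V, B u v = - B v u)
    (hAB : B (e 0) (e 1) = a • e 0 + b • e 1)
    (hAZ : B (e 0) (e 2) = α • e 2 + β • e 3)
    (hAW : B (e 0) (e 3) = -β • e 2 + α • e 3)
    (hBZ : B (e 1) (e 2) = x • e 2 + y • e 3)
    (hBW : B (e 1) (e 3) = -y • e 2 + x • e 3)
    (hZW : B (e 2) (e 3) = 0) :
    (∀ u v w : V, B u (B v w) + B v (B w u) + B w (B u v) = 0) ↔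
      (a * α + b * x = 0 ∧ a * β + b * y = 0) := by
  have hself : ∀ u : V, B u u = 0 := by
    intro u
    have h := hanti u u
    have h2 : (2 : ℝ) • B u u = 0 := by
      rw [two_smul]
      nth_rewrite 2 [h]
      simp
    rcases smul_eq_zero.mp h2 with h' | h'
    · norm_num at h'
    · exact h'
  have hBA : B (e 1) (e 0) = -(a • e 0 + b • e 1) := by rw [hanti, hAB]
  have hZA : B (e 2) (e 0) = -(α • e 2 + β • e 3) := by rw [hanti, hAZ]
  have hWA : B (e 3) (e 0) = -(-β • e 2 + α • e 3) := by rw [hanti, hAW]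
  have hZB : B (e 2) (e 1) = -(x • e 2 + y • e 3) := by rw [hanti, hBZ]
  have hWB : B (e 3) (e 1) = -(-y • e 2 + x • e 3) := by rw [hanti, hBW]
  have hWZ : B (e 3) (e 2) = 0 := by rw [hanti, hZW]; simp
  constructor
  · intro hJ
    constructor
    · have h := hJ (e 0) (e 1) (e 2)
      simp only [hBZ, hZA, hAB, map_add, map_smul, map_neg, hAZ, hAW, hZB,
        hself, smul_add, smul_smul, smul_neg, neg_smul] at h
      have h2 := congrArg (fun v => e.repr v 2) h
      simp [hBW, Finsupp.single_apply] at h2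
      linarith
    · have h := hJ (e 0) (e 1) (e 2)
      simp only [hBZ, hZA, hAB, map_add, map_smul, map_neg, hAZ, hAW, hZB,
        hself, smul_add, smul_smul, smul_neg, neg_smul] at h
      have h3 := congrArg (fun v => e.repr v 3) h
      simp [hBW, Finsupp.single_apply] at h3
      linarith
  · rintro ⟨h1, h2⟩
    have key : ∀ i j k : Fin 4,
        B (e i) (B (e j) (e k)) + B (e j) (B (e k) (e i)) + B (e k) (B (e i) (e j)) = 0 := by
      have E0 : (⟨0, by omega⟩ : Fin 4) = 0 := rfl
      have E1 : (⟨1, by omega⟩ : Fin 4) = 1 := rfl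
      have E2 : (⟨2, by omega⟩ : Fin 4) = 2 := rfl
      have E3 : (⟨3, by omega⟩ : Fin 4) = 3 := rfl
      intro i j k
      fin_cases i <;> fin_cases j <;> fin_cases k <;>
        simp only [E0, E1, E2, E3, Fin.isValue, hAB, hAZ, hAW, hBZ, hBW, hZW, hBA, hZA, hWA, hZB, hWB, hWZ,
          hself, map_add, map_smul, map_neg, map_zero, smul_add, smul_smul, smul_neg,
          neg_smul, smul_zero, neg_neg, neg_zero, add_zero, zero_add] <;>
        first
          | module
          | (match_scalars <;> linarith [h1, h2])
    intro u v w
    let L : V →ₗ[ℝ] V →ₗ[ℝ] V →ₗ[ℝ] V := LinearMap.mk₂ ℝ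
      (fun u v => B u ∘ₗ B v + B v ∘ₗ B.flip u + B.flip (B u v))
      (fun u u' v => by ext w; simp; abel)
      (fun c u v => by ext w; simp)
      (fun u v v' => by ext w; simp; abel)
      (fun c u v => by ext w; simp)
    have hLapp : ∀ u v w : V, L u v w = B u (B v w) + B v (B w u) + B w (B u v) := by
      intro u v w
      simp [L, LinearMap.mk₂_apply]
    have hL0 : L = 0 := by
      refine Module.Basis.ext e fun i => Module.Basis.ext e fun j => Module.Basis.ext e fun k => ?_
      simp only [LinearMap.zero_apply]
      rw [hLapp]
      exact key i j k
    rw [← hLapp, hL0]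
    simp
end

section
/- Let λ, α, β, θ be real numbers. On the 4-dimensional real vector space with basis {A, X, Z, W}, let ⁅·,·⁆ be the unique antisymmetric bilinear bracket determined on basis pairs by ⁅A,X⁆ = λX, ⁅A,Z⁆ = αZ + βW, ⁅A,W⁆ = −βZ + αW, ⁅Z,W⁆ = θX, and ⁅X,Z⁆ = ⁅X,W⁆ = 0. Then this bracket satisfies the Jacobi identity (and hence defines a Lie algebra structure) if and only if θ·(λ − 2α) = 0. -/
lemma self_bracket_zero {V : Type*} [AddCommGroup V] [Module ℝ V]
    (B : V →ₗ[ℝ] V →ₗ[ℝ] V) (hanti : ∀ u v : V, B u v = - B v u) (u : V) :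
    B u u = 0 := by
  have h := hanti u u
  have h2 : (2 : ℝ) • B u u = 0 := by
    rw [two_smul]; nth_rw 2 [h]; abel
  simpa using (smul_eq_zero.mp h2).resolve_left (by norm_num)

/-- The case `dim(𝔞,𝔨,𝔪) = (1,1,2)`: the antisymmetric bilinear bracket on the
4-dimensional real vector space with basis `{A, X, Z, W}` (here `e 0 = A`, `e 1 = X`,
`e 2 = Z`, `e 3 = W`) determined by `⁅A,X⁆ = λX`, `⁅A,Z⁆ = αZ + βW`,
`⁅A,W⁆ = −βZ + αW`, `⁅Z,W⁆ = θX`, `⁅X,Z⁆ = ⁅X,W⁆ = 0` satisfies the Jacobi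
identity iff `θ(λ − 2α) = 0`. -/
theorem jacobi_iff_dim_1_1_2 {V : Type*} [AddCommGroup V] [Module ℝ V]
    (e : Module.Basis (Fin 4) ℝ V) (lam α β θ : ℝ)
    (B : V →ₗ[ℝ] V →ₗ[ℝ] V)
    (hanti : ∀ u v : V, B u v = - B v u)
    (hAX : B (e 0) (e 1) = lam • e 1)
    (hAZ : B (e 0) (e 2) = α • e 2 + β • e 3)
    (hAW : B (e 0) (e 3) = -β • e 2 + α • e 3)
    (hXZ : B (e 1) (e 2) = 0)
    (hXW : B (e 1) (e 3) = 0)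
    (hZW : B (e 2) (e 3) = θ • e 1) :
    (∀ u v w : V, B u (B v w) + B v (B w u) + B w (B u v) = 0) ↔
      θ * (lam - 2 * α) = 0 := by
  have hself : ∀ u : V, B u u = 0 := self_bracket_zero B hanti
  have h10 : B (e 1) (e 0) = -(lam • e 1) := by rw [hanti, hAX]
  have h20 : B (e 2) (e 0) = -(α • e 2 + β • e 3) := by rw [hanti, hAZ]
  have h30 : B (e 3) (e 0) = -(-β • e 2 + α • e 3) := by rw [hanti, hAW]
  have h21 : B (e 2) (e 1) = 0 := by rw [hanti, hXZ, neg_zero]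
  have h31 : B (e 3) (e 1) = 0 := by rw [hanti, hXW, neg_zero]
  have h32 : B (e 3) (e 2) = -(θ • e 1) := by rw [hanti, hZW]
  constructor
  · intro h
    have h1 := h (e 0) (e 2) (e 3)
    simp only [hZW, hAZ, hAW, h30, h32, map_add, map_smul, map_neg, LinearMap.add_apply,
      LinearMap.smul_apply, LinearMap.neg_apply, hAX, hXZ, hXW, hself, h21, h31,
      smul_zero, add_zero, zero_add, smul_neg, smul_smul] at h1
    have h2 : (θ * (lam - 2 * α)) • e 1 = 0 := by
      rw [← h1]; module
    rcases smul_eq_zero.mp h2 with h3 | h3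
    · exact h3
    · exact absurd h3 (e.ne_zero 1)
  · intro h
    have key : ∀ i j k : Fin 4,
        B (e i) (B (e j) (e k)) + B (e j) (B (e k) (e i)) + B (e k) (B (e i) (e j)) = 0 := by
      intro i j k
      fin_cases i <;> fin_cases j <;> fin_cases k <;>
        simp only [Fin.isValue, Fin.mk_zero, Fin.mk_one,
          show (⟨2, by norm_num⟩ : Fin 4) = 2 from rfl,
          show (⟨3, by norm_num⟩ : Fin 4) = 3 from rfl,
          hAX, hAZ, hAW, hXZ, hXW, hZW, h10, h20, h30, h21, h31, h32, hself,
          map_add, map_smul, map_neg, LinearMap.smul_apply, LinearMap.neg_apply,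
          LinearMap.zero_apply, smul_zero, add_zero, zero_add, neg_zero, smul_neg,
          neg_neg, smul_smul, LinearMap.map_zero, map_zero] <;>
        first
          | rfl
          | (match_scalars <;> first
            | linear_combination h
            | linear_combination -h)
          | module
    have hT0 : (LinearMap.mk₂ ℝ
        (fun u v => (B u).comp (B v) + (B v).comp (B.flip u) + B.flip (B u v))
        (by intro u u' v; ext w; simp; abel)
        (by intro c u v; ext w; simp)
        (by intro u v v'; ext w; simp; abel)
        (by intro c u v; ext w; simp [smul_add]) : V →ₗ[ℝ] V →ₗ[ℝ] V →ₗ[ℝ] V) = 0 := by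
      apply e.ext; intro i
      apply e.ext; intro j
      apply e.ext; intro k
      simpa [LinearMap.mk₂_apply] using key i j k
    intro u v w
    have h1 : ((B u).comp (B v) + (B v).comp (B.flip u) + B.flip (B u v)) w = (0 : V) := by
      have := LinearMap.congr_fun (LinearMap.congr_fun (LinearMap.congr_fun hT0 u) v) w
      simpa [LinearMap.mk₂_apply] using this
    simpa using h1
end

section
/- Let a, b, λ, μ, α, β, x, y, θ be real numbers satisfying θ·(λ − 2α) = 0, θ·(μ − 2x) = 0, aα + bx = 0, aβ + by = 0, and aλ + bμ = 0. Then the 5-dimensional real Lie algebra 𝔤 with basis {A, B, X, Z, W} and bracket determined by ⁅A,B⁆ = aA + bB, ⁅A,X⁆ = λX, ⁅B,X⁆ = μX, ⁅A,Z⁆ = αZ + βW, ⁅A,W⁆ = −βZ + αW, ⁅B,Z⁆ = xZ + yW, ⁅B,W⁆ = −yZ + xW, ⁅Z,W⁆ = θX, ⁅X,Z⁆ = ⁅X,W⁆ = 0 (and antisymmetry) is solvable. -/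
section helpers
variable {L : Type*} [LieRing L] [LieAlgebra ℝ L]

/-- Extend a bracket-membership statement from generators to the span (right argument). -/
lemma lie_mem_span_right_aux {S : Submodule ℝ L} {t : Set L} (u : L)
    (h : ∀ g ∈ t, ⁅u, g⁆ ∈ S) : ∀ v ∈ Submodule.span ℝ t, ⁅u, v⁆ ∈ S := by
  intro v hv
  induction hv using Submodule.span_induction with
  | mem g hg => exact h g hg
  | zero => simpa using S.zero_mem
  | add p q _ _ hp hq => rw [lie_add]; exact S.add_mem hp hq
  | smul c p _ hp => rw [lie_smul]; exact S.smul_mem c hp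

/-- Extend to the span in the left argument. -/
lemma lie_mem_span_left_aux {S : Submodule ℝ L} {s : Set L} (v : L)
    (h : ∀ g ∈ s, ⁅g, v⁆ ∈ S) : ∀ u ∈ Submodule.span ℝ s, ⁅u, v⁆ ∈ S := by
  intro u hu
  induction hu using Submodule.span_induction with
  | mem g hg => exact h g hg
  | zero => simpa using S.zero_mem
  | add p q _ _ hp hq => rw [add_lie]; exact S.add_mem hp hq
  | smul c p _ hp => rw [smul_lie]; exact S.smul_mem c hp

lemma lie_mem_span_pair {S : Submodule ℝ L} {s t : Set L}
    (h : ∀ g ∈ s, ∀ g' ∈ t, ⁅g, g'⁆ ∈ S) :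
    ∀ u ∈ Submodule.span ℝ s, ∀ v ∈ Submodule.span ℝ t, ⁅u, v⁆ ∈ S := by
  intro u hu v hv
  exact lie_mem_span_left_aux v (fun g hg => lie_mem_span_right_aux g (h g hg) v hv) u hu

/-- Any bracket with a member of the span lies in `S`, given this for basis vectors. -/
lemma lie_mem_span_basis {ι : Type*} [Fintype ι] (e : Module.Basis ι ℝ L) {S : Submodule ℝ L}
    {t : Set L} (h : ∀ i, ∀ g ∈ t, ⁅e i, g⁆ ∈ S) :
    ∀ (u : L), ∀ v ∈ Submodule.span ℝ t, ⁅u, v⁆ ∈ S := by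
  intro u v hv
  have hu : u ∈ Submodule.span ℝ (Set.range e) := by rw [e.span_eq]; trivial
  refine lie_mem_span_left_aux v ?_ u hu
  rintro g ⟨i, rfl⟩
  exact lie_mem_span_right_aux (e i) (h i) v hv

end helpers

/-- The 5-dimensional real Lie algebra of the case `dim(𝔞,𝔨,𝔪) = (2,1,2)`, with basis
`{A, B, X, Z, W}` (here `e 0 = A`, `e 1 = B`, `e 2 = X`, `e 3 = Z`, `e 4 = W`) and
bracket `⁅A,B⁆ = aA + bB`, `⁅A,X⁆ = λX`, `⁅B,X⁆ = μX`, `⁅A,Z⁆ = αZ + βW`,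
`⁅A,W⁆ = −βZ + αW`, `⁅B,Z⁆ = xZ + yW`, `⁅B,W⁆ = −yZ + xW`, `⁅Z,W⁆ = θX`,
`⁅X,Z⁆ = ⁅X,W⁆ = 0`, where `θ(λ − 2α) = 0`, `θ(μ − 2x) = 0`, `aα + bx = 0`,
`aβ + by = 0` and `aλ + bμ = 0`, is solvable. -/
theorem solvable_dim_2_1_2 {L : Type*} [LieRing L] [LieAlgebra ℝ L]
    (e : Module.Basis (Fin 5) ℝ L) (a b lam μ α β x y θ : ℝ)
    (h1 : θ * (lam - 2 * α) = 0) (h2 : θ * (μ - 2 * x) = 0)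
    (h3 : a * α + b * x = 0) (h4 : a * β + b * y = 0) (h5 : a * lam + b * μ = 0)
    (hAB : ⁅e 0, e 1⁆ = a • e 0 + b • e 1)
    (hAX : ⁅e 0, e 2⁆ = lam • e 2)
    (hBX : ⁅e 1, e 2⁆ = μ • e 2)
    (hAZ : ⁅e 0, e 3⁆ = α • e 3 + β • e 4)
    (hAW : ⁅e 0, e 4⁆ = -β • e 3 + α • e 4)
    (hBZ : ⁅e 1, e 3⁆ = x • e 3 + y • e 4)
    (hBW : ⁅e 1, e 4⁆ = -y • e 3 + x • e 4)
    (hXZ : ⁅e 2, e 3⁆ = (0 : L))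
    (hXW : ⁅e 2, e 4⁆ = (0 : L))
    (hZW : ⁅e 3, e 4⁆ = θ • e 2) :
    LieAlgebra.IsSolvable L := by
  classical
  set v : L := a • e 0 + b • e 1 with hv
  -- key computed brackets with v
  have hv2 : ⁅v, e 2⁆ = 0 := by
    rw [hv, add_lie, smul_lie, smul_lie, hAX, hBX, smul_smul, smul_smul, ← add_smul, h5,
      zero_smul]
  have hv3 : ⁅v, e 3⁆ = 0 := by
    rw [hv, add_lie, smul_lie, smul_lie, hAZ, hBZ, smul_add, smul_add, smul_smul, smul_smul,
      smul_smul, smul_smul]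
    rw [add_add_add_comm, ← add_smul, ← add_smul, h3, h4, zero_smul, zero_smul, add_zero]
  have hv4 : ⁅v, e 4⁆ = 0 := by
    rw [hv, add_lie, smul_lie, smul_lie, hAW, hBW, smul_add, smul_add, smul_smul, smul_smul,
      smul_smul, smul_smul]
    rw [add_add_add_comm, ← add_smul, ← add_smul]
    rw [show a * -β + b * -y = -(a * β + b * y) by ring, h4, h3, neg_zero, zero_smul,
      zero_smul, add_zero]
  -- the three submodules
  set S1 : Submodule ℝ L := Submodule.span ℝ {v, e 2, e 3, e 4} with hS1
  set S2 : Submodule ℝ L := Submodule.span ℝ {e 2, e 3, e 4} with hS2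
  set S3 : Submodule ℝ L := Submodule.span ℝ {e 2} with hS3
  have m1v : v ∈ S1 := Submodule.subset_span (by simp)
  have m12 : e 2 ∈ S1 := Submodule.subset_span (by simp)
  have m13 : e 3 ∈ S1 := Submodule.subset_span (by simp)
  have m14 : e 4 ∈ S1 := Submodule.subset_span (by simp)
  have m22 : e 2 ∈ S2 := Submodule.subset_span (by simp)
  have m23 : e 3 ∈ S2 := Submodule.subset_span (by simp)
  have m24 : e 4 ∈ S2 := Submodule.subset_span (by simp)
  have m32 : e 2 ∈ S3 := Submodule.subset_span (by simp)
  have hei : ∀ i : Fin 5, e i = e 0 ∨ e i = e 1 ∨ e i = e 2 ∨ e i = e 3 ∨ e i = e 4 := by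
    intro i
    fin_cases i
    · exact Or.inl rfl
    · exact Or.inr (Or.inl rfl)
    · exact Or.inr (Or.inr (Or.inl rfl))
    · exact Or.inr (Or.inr (Or.inr (Or.inl rfl)))
    · exact Or.inr (Or.inr (Or.inr (Or.inr rfl)))
  -- brackets of basis vectors with the generators of S2, landing in S2
  have hbase2 : ∀ i : Fin 5, ∀ g ∈ ({e 2, e 3, e 4} : Set L), ⁅e i, g⁆ ∈ S2 := by
    intro i g hg
    rcases hei i with h | h | h | h | h <;> rw [h] <;>
      rcases hg with rfl | rfl | rfl <;>
      first
        | (rw [hAX]; exact S2.smul_mem _ m22)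
        | (rw [hBX]; exact S2.smul_mem _ m22)
        | (rw [hAZ]; exact S2.add_mem (S2.smul_mem _ m23) (S2.smul_mem _ m24))
        | (rw [hBZ]; exact S2.add_mem (S2.smul_mem _ m23) (S2.smul_mem _ m24))
        | (rw [hAW]; exact S2.add_mem (S2.smul_mem _ m23) (S2.smul_mem _ m24))
        | (rw [hBW]; exact S2.add_mem (S2.smul_mem _ m23) (S2.smul_mem _ m24))
        | (rw [hXZ]; exact S2.zero_mem)
        | (rw [hXW]; exact S2.zero_mem)
        | (rw [hZW]; exact S2.smul_mem _ m22)
        | (rw [lie_self]; exact S2.zero_mem)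
        | (rw [← lie_skew, hXZ, neg_zero]; exact S2.zero_mem)
        | (rw [← lie_skew, hXW, neg_zero]; exact S2.zero_mem)
        | (rw [← lie_skew, hZW]; exact S2.neg_mem (S2.smul_mem _ m22))
  have hS2S1 : S2 ≤ S1 := Submodule.span_le.2 (by
    rintro g (rfl | rfl | rfl)
    exacts [m12, m13, m14])
  -- the three Lie ideals
  have g2 : e 2 ∈ ({e 2, e 3, e 4} : Set L) := Set.mem_insert _ _
  have g3 : e 3 ∈ ({e 2, e 3, e 4} : Set L) := Set.mem_insert_of_mem _ (Set.mem_insert _ _)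
  have g4 : e 4 ∈ ({e 2, e 3, e 4} : Set L) :=
    Set.mem_insert_of_mem _ (Set.mem_insert_of_mem _ rfl)
  have hlie1 : ∀ (u : L) {m : L}, m ∈ S1 → ⁅u, m⁆ ∈ S1 := by
    intro u m hm
    refine lie_mem_span_basis e ?_ u m hm
    rintro i g (rfl | hg)
    · -- g = v
      have h0 : ⁅e 0, v⁆ ∈ S1 := by
        rw [hv, lie_add, lie_smul, lie_smul, hAB, lie_self, smul_zero, zero_add]
        exact S1.smul_mem _ m1v
      have h1' : ⁅e 1, v⁆ ∈ S1 := by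
        rw [hv, lie_add, lie_smul, lie_smul, lie_self, smul_zero, add_zero, ← lie_skew, hAB]
        exact S1.smul_mem _ (S1.neg_mem m1v)
      rcases hei i with h | h | h | h | h <;> rw [h]
      · exact h0
      · exact h1'
      · rw [← neg_neg ⁅e 2, v⁆, lie_skew, hv2, neg_zero]; exact S1.zero_mem
      · rw [← neg_neg ⁅e 3, v⁆, lie_skew, hv3, neg_zero]; exact S1.zero_mem
      · rw [← neg_neg ⁅e 4, v⁆, lie_skew, hv4, neg_zero]; exact S1.zero_mem
    · exact hS2S1 (hbase2 i g hg)
  have hlie2 : ∀ (u : L) {m : L}, m ∈ S2 → ⁅u, m⁆ ∈ S2 := by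
    intro u m hm
    exact lie_mem_span_basis e hbase2 u m hm
  have hlie3 : ∀ (u : L) {m : L}, m ∈ S3 → ⁅u, m⁆ ∈ S3 := by
    intro u m hm
    refine lie_mem_span_basis e ?_ u m hm
    rintro i g rfl
    rcases hei i with h | h | h | h | h <;> rw [h]
    · rw [hAX]; exact S3.smul_mem _ m32
    · rw [hBX]; exact S3.smul_mem _ m32
    · rw [lie_self]; exact S3.zero_mem
    · rw [← lie_skew, hXZ, neg_zero]; exact S3.zero_mem
    · rw [← lie_skew, hXW, neg_zero]; exact S3.zero_mem
  let I1 : LieIdeal ℝ L := { S1 with lie_mem := fun {u m} hm => hlie1 u hm }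
  let I2 : LieIdeal ℝ L := { S2 with lie_mem := fun {u m} hm => hlie2 u hm }
  let I3 : LieIdeal ℝ L := { S3 with lie_mem := fun {u m} hm => hlie3 u hm }
  have memI1 : ∀ {z : L}, z ∈ S1 → z ∈ I1 := fun h => h
  have memI2 : ∀ {z : L}, z ∈ S2 → z ∈ I2 := fun h => h
  have memI3 : ∀ {z : L}, z ∈ S3 → z ∈ I3 := fun h => h
  -- Step 1 : derived series 1 ≤ I1
  have step1 : LieAlgebra.derivedSeries ℝ L 1 ≤ I1 := by
    rw [show LieAlgebra.derivedSeries ℝ L 1 = ⁅(⊤ : LieIdeal ℝ L), (⊤ : LieIdeal ℝ L)⁆ from rfl]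
    rw [LieSubmodule.lie_le_iff]
    intro p _ q _
    show ⁅p, q⁆ ∈ S1
    have hq : q ∈ Submodule.span ℝ (Set.range e) := by rw [e.span_eq]; trivial
    refine lie_mem_span_basis e ?_ p q hq
    rintro i g ⟨j, rfl⟩
    rcases hei i with h | h | h | h | h <;> rw [h] <;>
      rcases hei j with h' | h' | h' | h' | h' <;> rw [h'] <;>
      first
        | (rw [lie_self]; exact S1.zero_mem)
        | (rw [hAB]; exact m1v)
        | (rw [← lie_skew, hAB]; exact S1.neg_mem m1v)
        | exact hS2S1 (hbase2 _ _ g2)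
        | exact hS2S1 (hbase2 _ _ g3)
        | exact hS2S1 (hbase2 _ _ g4)
        | (rw [← lie_skew]; exact S1.neg_mem (hS2S1 (hbase2 _ _ g2)))
        | (rw [← lie_skew]; exact S1.neg_mem (hS2S1 (hbase2 _ _ g3)))
        | (rw [← lie_skew]; exact S1.neg_mem (hS2S1 (hbase2 _ _ g4)))
  -- Step 2 : ⁅I1, I1⁆ ≤ I2
  have step2 : ⁅I1, I1⁆ ≤ I2 := by
    rw [LieSubmodule.lie_le_iff]
    intro p hp q hq
    show ⁅p, q⁆ ∈ S2
    refine lie_mem_span_pair ?_ p hp q hq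
    rintro g (rfl | hg) g' (rfl | hg')
    · rw [lie_self]; exact S2.zero_mem
    · rcases hg' with rfl | rfl | rfl
      · rw [hv2]; exact S2.zero_mem
      · rw [hv3]; exact S2.zero_mem
      · rw [hv4]; exact S2.zero_mem
    · rcases hg with rfl | rfl | rfl
      · rw [← lie_skew, hv2, neg_zero]; exact S2.zero_mem
      · rw [← lie_skew, hv3, neg_zero]; exact S2.zero_mem
      · rw [← lie_skew, hv4, neg_zero]; exact S2.zero_mem
    · rcases hg with rfl | rfl | rfl <;> rcases hg' with rfl | rfl | rfl
      · rw [lie_self]; exact S2.zero_mem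
      · rw [hXZ]; exact S2.zero_mem
      · rw [hXW]; exact S2.zero_mem
      · rw [← lie_skew, hXZ, neg_zero]; exact S2.zero_mem
      · rw [lie_self]; exact S2.zero_mem
      · rw [hZW]; exact S2.smul_mem _ m22
      · rw [← lie_skew, hXW, neg_zero]; exact S2.zero_mem
      · rw [← lie_skew, hZW]; exact S2.neg_mem (S2.smul_mem _ m22)
      · rw [lie_self]; exact S2.zero_mem
  -- Step 3 : ⁅I2, I2⁆ ≤ I3
  have step3 : ⁅I2, I2⁆ ≤ I3 := by
    rw [LieSubmodule.lie_le_iff]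
    intro p hp q hq
    show ⁅p, q⁆ ∈ S3
    refine lie_mem_span_pair ?_ p hp q hq
    rintro g (rfl | rfl | rfl) g' (rfl | rfl | rfl) <;>
      first
        | (rw [lie_self]; exact S3.zero_mem)
        | (rw [hXZ]; exact S3.zero_mem)
        | (rw [hXW]; exact S3.zero_mem)
        | (rw [← lie_skew, hXZ, neg_zero]; exact S3.zero_mem)
        | (rw [← lie_skew, hXW, neg_zero]; exact S3.zero_mem)
        | (rw [hZW]; exact S3.smul_mem _ m32)
        | (rw [← lie_skew, hZW]; exact S3.neg_mem (S3.smul_mem _ m32))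
  -- Step 4 : ⁅I3, I3⁆ = ⊥
  have step4 : ⁅I3, I3⁆ ≤ (⊥ : LieIdeal ℝ L) := by
    rw [LieSubmodule.lie_le_iff]
    intro p hp q hq
    have : ⁅p, q⁆ ∈ (⊥ : Submodule ℝ L) := by
      refine lie_mem_span_pair ?_ p hp q hq
      rintro g rfl g' rfl
      rw [lie_self]; exact Submodule.zero_mem _
    simpa using this
  -- assemble
  refine (LieAlgebra.isSolvable_iff ℝ L).2 ⟨4, ?_⟩
  have d2 : LieAlgebra.derivedSeries ℝ L 2 ≤ I2 :=
    le_trans (LieSubmodule.mono_lie step1 step1) step2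
  have d3 : LieAlgebra.derivedSeries ℝ L 3 ≤ I3 :=
    le_trans (LieSubmodule.mono_lie d2 d2) step3
  have d4 : LieAlgebra.derivedSeries ℝ L 4 ≤ ⊥ :=
    le_trans (LieSubmodule.mono_lie d3 d3) step4
  exact le_bot_iff.mp d4
end

section
/- Let n ≥ 1 and α, β be real numbers. On the (n+3)-dimensional real vector space with basis {A, X₁, …, Xₙ, Z, W}, let ⁅·,·⁆ be the unique antisymmetric bilinear bracket determined on basis pairs by ⁅A,X_k⁆ = X_k for 1 ≤ k ≤ n, ⁅A,Z⁆ = αZ + βW, ⁅A,W⁆ = −βZ + αW, ⁅Z,W⁆ = X₁, and all other brackets of basis vectors equal to zero. Then this bracket satisfies the Jacobi identity (and hence defines a Lie algebra structure) if and only if α = 1/2. -/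
/-- Example 9.2, the case `dim(𝔞,𝔨,𝔪) = (1,n,2)` with non-integrable horizontal
distribution: on the `(n+3)`-dimensional real vector space with basis
`{A, X₁, …, Xₙ, Z, W}` (here `e (.inr 0) = A`, `e (.inl k) = X_k`, `e (.inr 1) = Z`,
`e (.inr 2) = W`), the antisymmetric bilinear bracket determined by `⁅A,X_k⁆ = X_k`,
`⁅A,Z⁆ = αZ + βW`, `⁅A,W⁆ = −βZ + αW`, `⁅Z,W⁆ = X₁`, and all other basis brackets
zero, satisfies the Jacobi identity iff `α = 1/2`. -/
theorem jacobi_iff_example_9_2 {V : Type*} [AddCommGroup V] [Module ℝ V]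
    (n : ℕ) (hn : 1 ≤ n) (e : Module.Basis (Fin n ⊕ Fin 3) ℝ V)
    (α β : ℝ)
    (B : V →ₗ[ℝ] V →ₗ[ℝ] V)
    (hanti : ∀ u v : V, B u v = - B v u)
    (hAX : ∀ k : Fin n, B (e (.inr 0)) (e (.inl k)) = e (.inl k))
    (hAZ : B (e (.inr 0)) (e (.inr 1)) = α • e (.inr 1) + β • e (.inr 2))
    (hAW : B (e (.inr 0)) (e (.inr 2)) = -β • e (.inr 1) + α • e (.inr 2))
    (hXX : ∀ k l : Fin n, B (e (.inl k)) (e (.inl l)) = 0)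
    (hXZ : ∀ k : Fin n, B (e (.inl k)) (e (.inr 1)) = 0)
    (hXW : ∀ k : Fin n, B (e (.inl k)) (e (.inr 2)) = 0)
    (hZW : B (e (.inr 1)) (e (.inr 2)) = e (.inl ⟨0, hn⟩)) :
    (∀ u v w : V, B u (B v w) + B v (B w u) + B w (B u v) = 0) ↔ α = 1 / 2 := by
  have Bself : ∀ u : V, B u u = 0 := by
    intro u
    have h2 : (2 : ℝ) • B u u = 0 := by
      rw [two_smul]; nth_rewrite 2 [hanti u u]; abel
    simpa using (smul_eq_zero.mp h2).resolve_left (by norm_num)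
  have hXA : ∀ k : Fin n, B (e (.inl k)) (e (.inr 0)) = -e (.inl k) := by
    intro k; rw [hanti, hAX]
  have hZA : B (e (.inr 1)) (e (.inr 0)) = -(α • e (.inr 1) + β • e (.inr 2)) := by
    rw [hanti, hAZ]
  have hWA : B (e (.inr 2)) (e (.inr 0)) = -(-β • e (.inr 1) + α • e (.inr 2)) := by
    rw [hanti, hAW]
  have hZX : ∀ k : Fin n, B (e (.inr 1)) (e (.inl k)) = 0 := by
    intro k; rw [hanti, hXZ]; simp
  have hWX : ∀ k : Fin n, B (e (.inr 2)) (e (.inl k)) = 0 := by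
    intro k; rw [hanti, hXW]; simp
  have hWZ : B (e (.inr 2)) (e (.inr 1)) = -e (.inl ⟨0, hn⟩) := by
    rw [hanti, hZW]
  constructor
  · intro hJ
    have h := hJ (e (.inr 0)) (e (.inr 1)) (e (.inr 2))
    rw [hZW, hWA, hAZ] at h
    simp only [hAX, map_neg, map_add, map_smul, hZA, hZW, Bself, hWZ, hWA,
      map_smul, smul_zero, smul_neg] at h
    have h' : (1 - 2 * α) • e (Sum.inl ⟨0, hn⟩) = 0 := by
      rw [← h]; module
    have hne : e (Sum.inl (⟨0, hn⟩ : Fin n)) ≠ 0 := e.ne_zero _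
    have := (smul_eq_zero.mp h').resolve_right hne
    linarith
  · intro hα
    subst hα
    have key : ∀ i j k : Fin n ⊕ Fin 3,
        B (e i) (B (e j) (e k)) + B (e j) (B (e k) (e i)) + B (e k) (B (e i) (e j)) = 0 := by
      have f0 : ∀ (h : (0:ℕ) < 3), (⟨0, h⟩ : Fin 3) = 0 := fun _ => rfl
      have f1 : ∀ (h : (1:ℕ) < 3), (⟨1, h⟩ : Fin 3) = 1 := fun _ => rfl
      have f2 : ∀ (h : (2:ℕ) < 3), (⟨2, h⟩ : Fin 3) = 2 := fun _ => rfl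
      intro i j k
      rcases i with i | i <;> rcases j with j | j <;> rcases k with k | k <;>
        (try fin_cases i) <;> (try fin_cases j) <;> (try fin_cases k)
      all_goals
        simp only [f0, f1, f2, Fin.isValue, hAX, hAZ, hAW, hXX, hXZ, hXW, hZW, hXA, hZA, hWA, hZX, hWX, hWZ,
          Bself, map_add, map_smul, map_neg, map_zero, smul_zero, smul_neg, neg_neg,
          smul_add, neg_zero, add_zero, zero_add, neg_add_rev]
      all_goals module
    -- extend to all of V by trilinearity
    set T1 : V →ₗ[ℝ] V →ₗ[ℝ] V →ₗ[ℝ] V := ((LinearMap.llcomp ℝ V V V).comp B).compl₂ B with hT1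
    set T2 : V →ₗ[ℝ] V →ₗ[ℝ] V →ₗ[ℝ] V := ((LinearMap.lflip (R₀ := ℝ) : (V →ₗ[ℝ] V →ₗ[ℝ] V) ≃ₗ[ℝ] (V →ₗ[ℝ] V →ₗ[ℝ] V)).toLinearMap ∘ₗ T1).flip with hT2
    set T3 : V →ₗ[ℝ] V →ₗ[ℝ] V →ₗ[ℝ] V := ((LinearMap.lflip (R₀ := ℝ) : (V →ₗ[ℝ] V →ₗ[ℝ] V) ≃ₗ[ℝ] (V →ₗ[ℝ] V →ₗ[ℝ] V)).toLinearMap ∘ₗ T2).flip with hT3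
    have hT1a : ∀ u v w : V, T1 u v w = B u (B v w) := fun u v w => rfl
    have hT2a : ∀ u v w : V, T2 u v w = B v (B w u) := fun u v w => rfl
    have hT3a : ∀ u v w : V, T3 u v w = B w (B u v) := fun u v w => rfl
    have hzero : T1 + T2 + T3 = 0 := by
      apply e.ext; intro i
      apply e.ext; intro j
      apply e.ext; intro k
      simp only [LinearMap.add_apply, LinearMap.zero_apply, hT1a, hT2a, hT3a]
      exact key i j k
    intro u v w
    have := congrFun (congrArg DFunLike.coe (congrFun (congrArg DFunLike.coe
      (congrFun (congrArg DFunLike.coe hzero) u)) v)) w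
    simpa [hT1a, hT2a, hT3a] using this
end
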